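/- Let s, u ∈ ℂ with s ≠ 0, let A = [[s, 1], [0, s⁻¹]], B = [[s, 0], [−u, s⁻¹]] in SL₂(ℂ), W = B·A⁻¹·B⁻¹·A, x = s + s⁻¹, and z = 2 + (2 − s² − s⁻²)u + u². Let n ≥ 1 be a natural number, and set Δ = ∑_{i=0}^{n−1} W^{−i} and Ω = A⁻¹·(I − B)·(I − A)·Δ. If the Riley condition S_n(z) = (u² − (u+1)(s² + s⁻² − 3))·S_{n−1}(z) holds and x ≠ 2, then det(I + Ω) / (2 − x) = (2 − x)·(P_{n−1}(z) + P_{n−2}(z)) + x·S_{n−1}(z). (This is the Reidemeister torsion τ_ρ(E_K) of the complement of the twist knot K = J(2,2n) at the nonabelian representation ρ determined by (s,u), computed via Johnson's formula.) -/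

import Mathlib

open Matrix


set_option maxRecDepth 100000
set_option maxHeartbeats 4000000 in
lemma key_scalar (s t u a q1 q2 : ℂ)
    (hst : s * t = 1)
    (hE1 : ((2 + (2 - s ^ 2 - t ^ 2) * u + u ^ 2) - 2) * a = q1 - q2 - 1)
    (hE2 : q1 ^ 2 - (2 + (2 - s ^ 2 - t ^ 2) * u + u ^ 2) * q1 * q2 + q2 ^ 2 = 1)
    (hE3 : ((2 + (2 - s ^ 2 - t ^ 2) * u + u ^ 2) - 2) * a ^ 2 + 2 * a = q1 * q2)
    (hR0 : (2 + (2 - s ^ 2 - t ^ 2) * u + u ^ 2) * q1 - q2 = (u ^ 2 - (u + 1) * (s ^ 2 + t ^ 2 - 3)) * q1) :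
    1 + (-1)*u + (-1)*u*q2 + (-2)*u^2*a + (-1)*u^3*a + t + t*q2 + t*u*a + 2*t*u^2*a + t^2*u*a + t^2*u^2*a + (-2)*t^3*u*a + s + s*q2 + s*u*a + 2*s*u^2*a + (-3)*s*t + (-2)*s*t*q2 + s*t*q2^2 + (-4)*s*t*u*a + 2*s*t*u*a*q2 + (-2)*s*t*u^2*a + s*t*u^2*a*q2 + (-1)*s*t^2 + (-3)*s*t^2*q2 + (-2)*s*t^2*q2^2 + (-2)*s*t^2*u*a + (-4)*s*t^2*u*a*q2 + (-2)*s*t^2*u^2*a + (-2)*s*t^2*u^2*a*q2 + s*t^3 + 2*s*t^3*q2 + s*t^3*q2^2 + 3*s*t^3*u*a + s*t^3*u*a*q2 + s*t^3*u*a^2 + s*t^3*u^2*a + s*t^3*u^2*a*q2 + 2*s*t^4*u*a + 2*s*t^4*u*a*q2 + (-2)*s*t^4*u*a^2 + (-1)*s*t^5*u*a + (-1)*s*t^5*u*a*q2 + s*t^5*u*a^2 + s^2*u*a + s^2*u^2*a + (-1)*s^2*t + (-3)*s^2*t*q2 + (-2)*s^2*t*q2^2 + (-2)*s^2*t*u*a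 + (-4)*s^2*t*u*a*q2 + (-2)*s^2*t*u^2*a + (-2)*s^2*t*u^2*a*q2 + 4*s^2*t^2 + 8*s^2*t^2*q2 + 4*s^2*t^2*q2^2 + 8*s^2*t^2*u*a + 8*s^2*t^2*u*a*q2 + (-2)*s^2*t^2*u*a^2 + 4*s^2*t^2*u^2*a + 4*s^2*t^2*u^2*a*q2 + (-2)*s^2*t^2*u^2*a^2 + (-2)*s^2*t^3 + (-4)*s^2*t^3*q2 + (-2)*s^2*t^3*q2^2 + (-3)*s^2*t^3*u*a + (-2)*s^2*t^3*u*a*q2 + 2*s^2*t^3*u*a^2 + (-2)*s^2*t^3*u^2*a + (-2)*s^2*t^3*u^2*a*q2 + 4*s^2*t^3*u^2*a^2 + (-4)*s^2*t^4*u*a + (-4)*s^2*t^4*u*a*q2 + 2*s^2*t^4*u*a^2 + (-2)*s^2*t^4*u^2*a^2 + 2*s^2*t^5*u*a + 2*s^2*t^5*u*a*q2 + (-2)*s^2*t^5*u*a^2 + (-2)*s^3*u*a + s^3*t + 2*s^3*t*q2 + s^3*t*q2^2 + 3*s^3*t*u*a + s^3*t*u*a*q2 + s^3*t*u*a^2 +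 s^3*t*u^2*a + s^3*t*u^2*a*q2 + (-2)*s^3*t^2 + (-4)*s^3*t^2*q2 + (-2)*s^3*t^2*q2^2 + (-3)*s^3*t^2*u*a + (-2)*s^3*t^2*u*a*q2 + 2*s^3*t^2*u*a^2 + (-2)*s^3*t^2*u^2*a + (-2)*s^3*t^2*u^2*a*q2 + 4*s^3*t^2*u^2*a^2 + s^3*t^3 + 2*s^3*t^3*q2 + s^3*t^3*q2^2 + (-6)*s^3*t^3*u*a^2 + s^3*t^3*u^2*a + s^3*t^3*u^2*a*q2 + (-7)*s^3*t^3*u^2*a^2 + 2*s^3*t^4*u*a + 2*s^3*t^4*u*a*q2 + 2*s^3*t^4*u*a^2 + 2*s^3*t^4*u^2*a^2 + (-1)*s^3*t^5*u*a + (-1)*s^3*t^5*u*a*q2 + s^3*t^5*u*a^2 + s^3*t^5*u^2*a^2 + 2*s^4*t*u*a + 2*s^4*t*u*a*q2 + (-2)*s^4*t*u*a^2 + (-4)*s^4*t^2*u*a + (-4)*s^4*t^2*u*a*q2 + 2*s^4*t^2*u*a^2 + (-2)*s^4*t^2*u^2*a^2 + 2*s^4*t^3*u*a + 2*s^4*t^3*u*a*q2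 + 2*s^4*t^3*u*a^2 + 2*s^4*t^3*u^2*a^2 + (-2)*s^4*t^4*u*a^2 + 2*s^4*t^4*u^2*a^2 + (-2)*s^4*t^5*u^2*a^2 + (-1)*s^5*t*u*a + (-1)*s^5*t*u*a*q2 + s^5*t*u*a^2 + 2*s^5*t^2*u*a + 2*s^5*t^2*u*a*q2 + (-2)*s^5*t^2*u*a^2 + (-1)*s^5*t^3*u*a + (-1)*s^5*t^3*u*a*q2 + s^5*t^3*u*a^2 + s^5*t^3*u^2*a^2 + (-2)*s^5*t^4*u^2*a^2 + s^5*t^5*u^2*a^2 =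
    4*q1 + 8*a + (-2)*t*q1 + (-8)*t*a + 2*t^2*a + (-2)*s*q1 + (-8)*s*a + 4*s*t*a + 2*s^2*a := by
  by_cases hz : (2 - s ^ 2 - t ^ 2) * u + u ^ 2 = 0
  · have hq2 : q2 = q1 - 1 := by linear_combination hE1 - a * hz
    have h2a : 2 * a = q1 ^ 2 - q1 := by linear_combination hE3 - a ^ 2 * hz + q1 * hq2
    linear_combination hR0 + (1 + (-1)*u + t + s + (-3)*s*t + s*t*q2 + s*t*q1 + 2*s*t*u*a + s*t*u^2*a + (-1)*s*t^2 + (-2)*s*t^2*q2 + (-2)*s*t^2*q1 + (-4)*s*t^2*u*a + (-2)*s*t^2*u^2*a + s*t^3 + s*t^3*q2 + s*t^3*q1 + s*t^3*u*a + s*t^3*u^2*a + 2*s*t^4*u*a + (-1)*s*t^5*u*a + (-1)*s^2*t + (-2)*s^2*t*q2 + (-2)*s^2*t*q1 + (-4)*s^2*t*u*a + (-2)*s^2*t*u^2*a + 4*s^2*t^2 + 4*s^2*t^2*q2 + 4*s^2*t^2*q1 + 8*s^2*t^2*u*a + 4*s^2*t^2*u^2*a + (-2)*s^2*t^3 + (-2)*s^2*t^3*q2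 + (-2)*s^2*t^3*q1 + (-2)*s^2*t^3*u*a + (-2)*s^2*t^3*u^2*a + (-4)*s^2*t^4*u*a + 2*s^2*t^5*u*a + s^3*t + s^3*t*q2 + s^3*t*q1 + s^3*t*u*a + s^3*t*u^2*a + (-2)*s^3*t^2 + (-2)*s^3*t^2*q2 + (-2)*s^3*t^2*q1 + (-2)*s^3*t^2*u*a + (-2)*s^3*t^2*u^2*a + s^3*t^3 + s^3*t^3*q2 + s^3*t^3*q1 + s^3*t^3*u^2*a + 2*s^3*t^4*u*a + (-1)*s^3*t^5*u*a + 2*s^4*t*u*a + (-4)*s^4*t^2*u*a + 2*s^4*t^3*u*a + (-1)*s^5*t*u*a + 2*s^5*t^2*u*a + (-1)*s^5*t^3*u*a) * hq2 + ((-4) + (-1)*u^2 + (-1/2 : ℂ)*u^3 + 4*t + (1/2 : ℂ)*t*u + t*u^2 + (-1)*t^2 + (1/2 : ℂ)*t^2*u + (1/2 : ℂ)*t^2*u^2 + (-1)*t^3*u + 4*s + (1/2 : ℂ)*s*u + s*u^2 + (-2)*s*t + (-3)*s*t*u + s*t*u*q1 + (-3/2 : ℂ)*s*t*u^2 + (1/2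 : ℂ)*s*t*u^2*q1 + s*t^2*u + (-2)*s*t^2*u*q1 + (-1)*s*t^2*u^2*q1 + s*t^3*u + (1/4 : ℂ)*s*t^3*u*q1 + (1/4 : ℂ)*s*t^3*u*q1^2 + (1/2 : ℂ)*s*t^3*u*a + (1/2 : ℂ)*s*t^3*u^2*q1 + (3/2 : ℂ)*s*t^4*u*q1 + (-1/2 : ℂ)*s*t^4*u*q1^2 + (-1)*s*t^4*u*a + (-3/4 : ℂ)*s*t^5*u*q1 + (1/4 : ℂ)*s*t^5*u*q1^2 + (1/2 : ℂ)*s*t^5*u*a + (-1)*s^2 + (1/2 : ℂ)*s^2*u + (1/2 : ℂ)*s^2*u^2 + s^2*t*u + (-2)*s^2*t*u*q1 + (-1)*s^2*t*u^2*q1 + (9/2 : ℂ)*s^2*t^2*u*q1 + (-1/2 : ℂ)*s^2*t^2*u*q1^2 + (-1)*s^2*t^2*u*a + (5/2 : ℂ)*s^2*t^2*u^2*q1 + (-1/2 : ℂ)*s^2*t^2*u^2*q1^2 + (-1)*s^2*t^2*u^2*a + (-1/2 : ℂ)*s^2*t^3*u + (-3/2 : ℂ)*s^2*t^3*u*q1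 + (1/2 : ℂ)*s^2*t^3*u*q1^2 + s^2*t^3*u*a + (-2)*s^2*t^3*u^2*q1 + s^2*t^3*u^2*q1^2 + 2*s^2*t^3*u^2*a + (-5/2 : ℂ)*s^2*t^4*u*q1 + (1/2 : ℂ)*s^2*t^4*u*q1^2 + s^2*t^4*u*a + (1/2 : ℂ)*s^2*t^4*u^2*q1 + (-1/2 : ℂ)*s^2*t^4*u^2*q1^2 + (-1)*s^2*t^4*u^2*a + (3/2 : ℂ)*s^2*t^5*u*q1 + (-1/2 : ℂ)*s^2*t^5*u*q1^2 + (-1)*s^2*t^5*u*a + (-1)*s^3*u + s^3*t*u + (1/4 : ℂ)*s^3*t*u*q1 + (1/4 : ℂ)*s^3*t*u*q1^2 + (1/2 : ℂ)*s^3*t*u*a + (1/2 : ℂ)*s^3*t*u^2*q1 + (-1/2 : ℂ)*s^3*t^2*u + (-3/2 : ℂ)*s^3*t^2*u*q1 + (1/2 : ℂ)*s^3*t^2*u*q1^2 + s^3*t^2*u*a + (-2)*s^3*t^2*u^2*q1 + s^3*t^2*u^2*q1^2 + 2*s^3*t^2*u^2*a + (3/2 : ℂ)*s^3*t^3*u*q1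 + (-3/2 : ℂ)*s^3*t^3*u*q1^2 + (-3)*s^3*t^3*u*a + (9/4 : ℂ)*s^3*t^3*u^2*q1 + (-7/4 : ℂ)*s^3*t^3*u^2*q1^2 + (-7/2 : ℂ)*s^3*t^3*u^2*a + (1/2 : ℂ)*s^3*t^4*u*q1 + (1/2 : ℂ)*s^3*t^4*u*q1^2 + s^3*t^4*u*a + (-1/2 : ℂ)*s^3*t^4*u^2*q1 + (1/2 : ℂ)*s^3*t^4*u^2*q1^2 + s^3*t^4*u^2*a + (-3/4 : ℂ)*s^3*t^5*u*q1 + (1/4 : ℂ)*s^3*t^5*u*q1^2 + (1/2 : ℂ)*s^3*t^5*u*a + (-1/4 : ℂ)*s^3*t^5*u^2*q1 + (1/4 : ℂ)*s^3*t^5*u^2*q1^2 + (1/2 : ℂ)*s^3*t^5*u^2*a + (3/2 : ℂ)*s^4*t*u*q1 + (-1/2 : ℂ)*s^4*t*u*q1^2 + (-1)*s^4*t*u*a + (-5/2 : ℂ)*s^4*t^2*u*q1 + (1/2 : ℂ)*s^4*t^2*u*q1^2 + s^4*t^2*u*a + (1/2 : ℂ)*s^4*t^2*u^2*q1 + (-1/2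 : ℂ)*s^4*t^2*u^2*q1^2 + (-1)*s^4*t^2*u^2*a + (1/2 : ℂ)*s^4*t^3*u*q1 + (1/2 : ℂ)*s^4*t^3*u*q1^2 + s^4*t^3*u*a + (-1/2 : ℂ)*s^4*t^3*u^2*q1 + (1/2 : ℂ)*s^4*t^3*u^2*q1^2 + s^4*t^3*u^2*a + (1/2 : ℂ)*s^4*t^4*u*q1 + (-1/2 : ℂ)*s^4*t^4*u*q1^2 + (-1)*s^4*t^4*u*a + (-1/2 : ℂ)*s^4*t^4*u^2*q1 + (1/2 : ℂ)*s^4*t^4*u^2*q1^2 + s^4*t^4*u^2*a + (1/2 : ℂ)*s^4*t^5*u^2*q1 + (-1/2 : ℂ)*s^4*t^5*u^2*q1^2 + (-1)*s^4*t^5*u^2*a + (-3/4 : ℂ)*s^5*t*u*q1 + (1/4 : ℂ)*s^5*t*u*q1^2 + (1/2 : ℂ)*s^5*t*u*a + (3/2 : ℂ)*s^5*t^2*u*q1 + (-1/2 : ℂ)*s^5*t^2*u*q1^2 + (-1)*s^5*t^2*u*a + (-3/4 : ℂ)*s^5*t^3*u*q1 + (1/4 : ℂ)*s^5*t^3*u*q1^2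 + (1/2 : ℂ)*s^5*t^3*u*a + (-1/4 : ℂ)*s^5*t^3*u^2*q1 + (1/4 : ℂ)*s^5*t^3*u^2*q1^2 + (1/2 : ℂ)*s^5*t^3*u^2*a + (1/2 : ℂ)*s^5*t^4*u^2*q1 + (-1/2 : ℂ)*s^5*t^4*u^2*q1^2 + (-1)*s^5*t^4*u^2*a + (-1/4 : ℂ)*s^5*t^5*u^2*q1 + (1/4 : ℂ)*s^5*t^5*u^2*q1^2 + (1/2 : ℂ)*s^5*t^5*u^2*a) * h2a + ((1/2 : ℂ)*u*q1 + (-1/2 : ℂ)*u*q1^2 + (-1)*t*q1 + t*q1^2 + (-1)*s*q1 + s*q1^2 + (3/2 : ℂ)*s*t*q1 + (-2)*s*t*q1^2 + (1/2 : ℂ)*s*t*q1^3 + s*t^2*q1^2 + (-1)*s*t^2*q1^3 + (-1/2 : ℂ)*s*t^3*q1^2 + (1/2 : ℂ)*s*t^3*q1^3 + s^2*t*q1^2 + (-1)*s^2*t*q1^3 + (-5/2 : ℂ)*s^2*t^2*q1^2 + 3*s^2*t^2*q1^3 + (-1/2 : ℂ)*s^2*t^2*q1^4 + 2*s^2*t^3*q1^2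 + (-3)*s^2*t^3*q1^3 + s^2*t^3*q1^4 + (-1/2 : ℂ)*s^2*t^4*q1^2 + s^2*t^4*q1^3 + (-1/2 : ℂ)*s^2*t^4*q1^4 + (-1/2 : ℂ)*s^3*t*q1^2 + (1/2 : ℂ)*s^3*t*q1^3 + 2*s^3*t^2*q1^2 + (-3)*s^3*t^2*q1^3 + s^3*t^2*q1^4 + (-9/4 : ℂ)*s^3*t^3*q1^2 + 4*s^3*t^3*q1^3 + (-7/4 : ℂ)*s^3*t^3*q1^4 + (1/2 : ℂ)*s^3*t^4*q1^2 + (-1)*s^3*t^4*q1^3 + (1/2 : ℂ)*s^3*t^4*q1^4 + (1/4 : ℂ)*s^3*t^5*q1^2 + (-1/2 : ℂ)*s^3*t^5*q1^3 + (1/4 : ℂ)*s^3*t^5*q1^4 + (-1/2 : ℂ)*s^4*t^2*q1^2 + s^4*t^2*q1^3 + (-1/2 : ℂ)*s^4*t^2*q1^4 + (1/2 : ℂ)*s^4*t^3*q1^2 + (-1)*s^4*t^3*q1^3 + (1/2 : ℂ)*s^4*t^3*q1^4 + (1/2 : ℂ)*s^4*t^4*q1^2 + (-1)*s^4*t^4*q1^3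 + (1/2 : ℂ)*s^4*t^4*q1^4 + (-1/2 : ℂ)*s^4*t^5*q1^2 + s^4*t^5*q1^3 + (-1/2 : ℂ)*s^4*t^5*q1^4 + (1/4 : ℂ)*s^5*t^3*q1^2 + (-1/2 : ℂ)*s^5*t^3*q1^3 + (1/4 : ℂ)*s^5*t^3*q1^4 + (-1/2 : ℂ)*s^5*t^4*q1^2 + s^5*t^4*q1^3 + (-1/2 : ℂ)*s^5*t^4*q1^4 + (1/4 : ℂ)*s^5*t^5*q1^2 + (-1/2 : ℂ)*s^5*t^5*q1^3 + (1/4 : ℂ)*s^5*t^5*q1^4) * hz + ((-2)*q1 + 4*q1^2 + t*q1 + (-4)*t*q1^2 + (-3/2 : ℂ)*t*u*q1 + (3/2 : ℂ)*t*u*q1^2 + t^2*q1^2 + (1/2 : ℂ)*t^2*u*q1 + (-1/2 : ℂ)*t^2*u*q1^2 + s*q1 + (-4)*s*q1^2 + (-3/2 : ℂ)*s*u*q1 + (3/2 : ℂ)*s*u*q1^2 + 5*s*t*q1^2 + (-2)*s*t^2*q1^2 + (1/2 : ℂ)*s*t^2*u*q1 + (-1/2 : ℂ)*s*t^2*u*q1^2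 + (-1/4 : ℂ)*s*t^3*u*q1^2 + (1/2 : ℂ)*s*t^3*u*q1^3 + (-1/4 : ℂ)*s*t^3*u*q1^4 + (1/2 : ℂ)*s*t^4*u*q1^2 + (-1)*s*t^4*u*q1^3 + (1/2 : ℂ)*s*t^4*u*q1^4 + (-1/4 : ℂ)*s*t^5*u*q1^2 + (1/2 : ℂ)*s*t^5*u*q1^3 + (-1/4 : ℂ)*s*t^5*u*q1^4 + s^2*q1^2 + (1/2 : ℂ)*s^2*u*q1 + (-1/2 : ℂ)*s^2*u*q1^2 + (-2)*s^2*t*q1^2 + (1/2 : ℂ)*s^2*t*u*q1 + (-1/2 : ℂ)*s^2*t*u*q1^2 + s^2*t^2*q1^2 + (-1/2 : ℂ)*s^2*t^2*u*q1^2 + s^2*t^2*u*q1^3 + (-1/2 : ℂ)*s^2*t^2*u*q1^4 + (3/2 : ℂ)*s^2*t^3*u*q1^2 + (-3)*s^2*t^3*u*q1^3 + (3/2 : ℂ)*s^2*t^3*u*q1^4 + (-5/4 : ℂ)*s^2*t^4*u*q1^2 + (5/2 : ℂ)*s^2*t^4*u*q1^3 + (-5/4 : ℂ)*s^2*t^4*u*q1^4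 + (1/4 : ℂ)*s^2*t^6*u*q1^2 + (-1/2 : ℂ)*s^2*t^6*u*q1^3 + (1/4 : ℂ)*s^2*t^6*u*q1^4 + (-1/4 : ℂ)*s^3*t*u*q1^2 + (1/2 : ℂ)*s^3*t*u*q1^3 + (-1/4 : ℂ)*s^3*t*u*q1^4 + (3/2 : ℂ)*s^3*t^2*u*q1^2 + (-3)*s^3*t^2*u*q1^3 + (3/2 : ℂ)*s^3*t^2*u*q1^4 + (-5/2 : ℂ)*s^3*t^3*u*q1^2 + 5*s^3*t^3*u*q1^3 + (-5/2 : ℂ)*s^3*t^3*u*q1^4 + s^3*t^4*u*q1^2 + (-2)*s^3*t^4*u*q1^3 + s^3*t^4*u*q1^4 + (3/4 : ℂ)*s^3*t^5*u*q1^2 + (-3/2 : ℂ)*s^3*t^5*u*q1^3 + (3/4 : ℂ)*s^3*t^5*u*q1^4 + (-1/2 : ℂ)*s^3*t^6*u*q1^2 + s^3*t^6*u*q1^3 + (-1/2 : ℂ)*s^3*t^6*u*q1^4 + (1/2 : ℂ)*s^4*t*u*q1^2 + (-1)*s^4*t*u*q1^3 + (1/2 : ℂ)*s^4*t*u*q1^4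 + (-5/4 : ℂ)*s^4*t^2*u*q1^2 + (5/2 : ℂ)*s^4*t^2*u*q1^3 + (-5/4 : ℂ)*s^4*t^2*u*q1^4 + s^4*t^3*u*q1^2 + (-2)*s^4*t^3*u*q1^3 + s^4*t^3*u*q1^4 + (-1/2 : ℂ)*s^4*t^5*u*q1^2 + s^4*t^5*u*q1^3 + (-1/2 : ℂ)*s^4*t^5*u*q1^4 + (1/4 : ℂ)*s^4*t^6*u*q1^2 + (-1/2 : ℂ)*s^4*t^6*u*q1^3 + (1/4 : ℂ)*s^4*t^6*u*q1^4 + (-1/4 : ℂ)*s^5*t*u*q1^2 + (1/2 : ℂ)*s^5*t*u*q1^3 + (-1/4 : ℂ)*s^5*t*u*q1^4 + (3/4 : ℂ)*s^5*t^3*u*q1^2 + (-3/2 : ℂ)*s^5*t^3*u*q1^3 + (3/4 : ℂ)*s^5*t^3*u*q1^4 + (-1/2 : ℂ)*s^5*t^4*u*q1^2 + s^5*t^4*u*q1^3 + (-1/2 : ℂ)*s^5*t^4*u*q1^4 + (1/4 : ℂ)*s^6*t^2*u*q1^2 + (-1/2 : ℂ)*s^6*t^2*u*q1^3 + (1/4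 : ℂ)*s^6*t^2*u*q1^4 + (-1/2 : ℂ)*s^6*t^3*u*q1^2 + s^6*t^3*u*q1^3 + (-1/2 : ℂ)*s^6*t^3*u*q1^4 + (1/4 : ℂ)*s^6*t^4*u*q1^2 + (-1/2 : ℂ)*s^6*t^4*u*q1^3 + (1/4 : ℂ)*s^6*t^4*u*q1^4) * hst
  · have hkey : ((2 - s ^ 2 - t ^ 2) * u + u ^ 2) * ((1 + (-1)*u + (-1)*u*q2 + (-2)*u^2*a + (-1)*u^3*a + t + t*q2 + t*u*a + 2*t*u^2*a + t^2*u*a + t^2*u^2*a + (-2)*t^3*u*a + s + s*q2 + s*u*a + 2*s*u^2*a + (-3)*s*t + (-2)*s*t*q2 + s*t*q2^2 + (-4)*s*t*u*a + 2*s*t*u*a*q2 + (-2)*s*t*u^2*a + s*t*u^2*a*q2 + (-1)*s*t^2 + (-3)*s*t^2*q2 + (-2)*s*t^2*q2^2 + (-2)*s*t^2*u*a + (-4)*s*t^2*u*a*q2 + (-2)*s*t^2*u^2*a + (-2)*s*t^2*u^2*a*q2 + s*t^3 + 2*s*t^3*q2 + s*t^3*q2^2 + 3*s*t^3*u*a +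 s*t^3*u*a*q2 + s*t^3*u*a^2 + s*t^3*u^2*a + s*t^3*u^2*a*q2 + 2*s*t^4*u*a + 2*s*t^4*u*a*q2 + (-2)*s*t^4*u*a^2 + (-1)*s*t^5*u*a + (-1)*s*t^5*u*a*q2 + s*t^5*u*a^2 + s^2*u*a + s^2*u^2*a + (-1)*s^2*t + (-3)*s^2*t*q2 + (-2)*s^2*t*q2^2 + (-2)*s^2*t*u*a + (-4)*s^2*t*u*a*q2 + (-2)*s^2*t*u^2*a + (-2)*s^2*t*u^2*a*q2 + 4*s^2*t^2 + 8*s^2*t^2*q2 + 4*s^2*t^2*q2^2 + 8*s^2*t^2*u*a + 8*s^2*t^2*u*a*q2 + (-2)*s^2*t^2*u*a^2 + 4*s^2*t^2*u^2*a + 4*s^2*t^2*u^2*a*q2 + (-2)*s^2*t^2*u^2*a^2 + (-2)*s^2*t^3 + (-4)*s^2*t^3*q2 + (-2)*s^2*t^3*q2^2 + (-3)*s^2*t^3*u*a + (-2)*s^2*t^3*u*a*q2 + 2*s^2*t^3*u*a^2 + (-2)*s^2*t^3*u^2*a + (-2)*s^2*t^3*u^2*a*q2 + 4*s^2*t^3*u^2*a^2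 + (-4)*s^2*t^4*u*a + (-4)*s^2*t^4*u*a*q2 + 2*s^2*t^4*u*a^2 + (-2)*s^2*t^4*u^2*a^2 + 2*s^2*t^5*u*a + 2*s^2*t^5*u*a*q2 + (-2)*s^2*t^5*u*a^2 + (-2)*s^3*u*a + s^3*t + 2*s^3*t*q2 + s^3*t*q2^2 + 3*s^3*t*u*a + s^3*t*u*a*q2 + s^3*t*u*a^2 + s^3*t*u^2*a + s^3*t*u^2*a*q2 + (-2)*s^3*t^2 + (-4)*s^3*t^2*q2 + (-2)*s^3*t^2*q2^2 + (-3)*s^3*t^2*u*a + (-2)*s^3*t^2*u*a*q2 + 2*s^3*t^2*u*a^2 + (-2)*s^3*t^2*u^2*a + (-2)*s^3*t^2*u^2*a*q2 + 4*s^3*t^2*u^2*a^2 + s^3*t^3 + 2*s^3*t^3*q2 + s^3*t^3*q2^2 + (-6)*s^3*t^3*u*a^2 + s^3*t^3*u^2*a + s^3*t^3*u^2*a*q2 + (-7)*s^3*t^3*u^2*a^2 + 2*s^3*t^4*u*a + 2*s^3*t^4*u*a*q2 + 2*s^3*t^4*u*a^2 + 2*s^3*t^4*u^2*a^2 + (-1)*s^3*t^5*u*a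 + (-1)*s^3*t^5*u*a*q2 + s^3*t^5*u*a^2 + s^3*t^5*u^2*a^2 + 2*s^4*t*u*a + 2*s^4*t*u*a*q2 + (-2)*s^4*t*u*a^2 + (-4)*s^4*t^2*u*a + (-4)*s^4*t^2*u*a*q2 + 2*s^4*t^2*u*a^2 + (-2)*s^4*t^2*u^2*a^2 + 2*s^4*t^3*u*a + 2*s^4*t^3*u*a*q2 + 2*s^4*t^3*u*a^2 + 2*s^4*t^3*u^2*a^2 + (-2)*s^4*t^4*u*a^2 + 2*s^4*t^4*u^2*a^2 + (-2)*s^4*t^5*u^2*a^2 + (-1)*s^5*t*u*a + (-1)*s^5*t*u*a*q2 + s^5*t*u*a^2 + 2*s^5*t^2*u*a + 2*s^5*t^2*u*a*q2 + (-2)*s^5*t^2*u*a^2 + (-1)*s^5*t^3*u*a + (-1)*s^5*t^3*u*a*q2 + s^5*t^3*u*a^2 + s^5*t^3*u^2*a^2 + (-2)*s^5*t^4*u^2*a^2 + s^5*t^5*u^2*a^2) - (4*q1 + 8*a + (-2)*t*q1 + (-8)*t*a + 2*t^2*a + (-2)*s*q1 + (-8)*s*a + 4*s*t*a + 2*s^2*a))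 = 0 := by
      linear_combination ((-6) + 6*q2 + (-6)*q1 + 4*u + 10*u*q2 + (-10)*u*a + u^2 + 6*u^2*q2 + (-6)*u^2*a + (-1)*u^3 + 4*t + (-4)*t*q2 + 4*t*q1 + (-2)*t*u + (-4)*t*u*q2 + 4*t*u*a + (-2)*t*u^2 + (-4)*t*u^2*q2 + 4*t*u^2*a + (-1)*t^2 + t^2*q2 + (-1)*t^2*q1 + (-1)*t^2*u + (-4)*t^2*u*q2 + 4*t^2*u*a + 2*t^2*u^2 + t^2*u^2*q2 + (-1)*t^2*u^2*a + 2*t^3*u + 4*t^3*u*q2 + (-4)*t^3*u*a + (-1)*t^4*u + (-1)*t^4*u*q2 + t^4*u*a + 4*s + (-4)*s*q2 + 4*s*q1 + (-2)*s*u + (-4)*s*u*q2 + 4*s*u*a + (-2)*s*u^2 + (-4)*s*u^2*q2 + 4*s*u^2*a + (-1)*s^2 + s^2*q2 + (-1)*s^2*q1 + (-1)*s^2*u + (-4)*s^2*u*q2 + 4*s^2*u*a + 2*s^2*u^2 + s^2*u^2*q2 + (-1)*s^2*u^2*a + 2*s^3*u + 4*s^3*u*q2 + (-4)*s^3*u*a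 + (-1)*s^4*u + (-1)*s^4*u*q2 + s^4*u*a) * hE1 + ((-6) + 4*t + (-1)*t^2 + 4*s + (-1)*s^2) * hE2 + ((2 - s ^ 2 - t ^ 2) * u + u ^ 2) * hR0 + (2*u + 12*u*q2 + 10*u*q2^2 + 2*u*q1 + 2*u*q1*q2 + (-6)*u*a + 2*u*a*q2 + (-2)*u*a*q1 + 2*u^2 + 8*u^2*q2 + 6*u^2*q2^2 + 4*u^2*a + 20*u^2*a*q2 + (-20)*u^2*a^2 + 10*u^3*a + 22*u^3*a*q2 + (-22)*u^3*a^2 + 3*u^4*a + 6*u^4*a*q2 + (-6)*u^4*a^2 + (-4)*t*u + (-8)*t*u*q2 + (-4)*t*u*q2^2 + (-2)*t*u*q1 + (-4)*t*u*q1*q2 + (-4)*t*u*a + (-4)*t*u*a*q2 + 4*t*u*a*q1 + (-3)*t*u^2 + (-7)*t*u^2*q2 + (-4)*t*u^2*q2^2 + (-6)*t*u^2*a + (-8)*t*u^2*a*q2 + 8*t*u^2*a^2 + (-11)*t*u^3*a + (-12)*t*u^3*a*q2 + 12*t*u^3*a^2 + (-4)*t*u^4*a + (-4)*t*u^4*a*q2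 + 4*t*u^4*a^2 + (-4)*t^2*u*q2 + (-4)*t^2*u*q2^2 + 4*t^2*u*a + t^2*u^2 + 2*t^2*u^2*q2 + t^2*u^2*q2^2 + (-8)*t^2*u^2*a + (-18)*t^2*u^2*a*q2 + 18*t^2*u^2*a^2 + (-3)*t^2*u^3*a + (-8)*t^2*u^3*a*q2 + 8*t^2*u^3*a^2 + t^2*u^4*a + t^2*u^4*a*q2 + (-1)*t^2*u^4*a^2 + 3*t^3*u + 7*t^3*u*q2 + 4*t^3*u*q2^2 + 11*t^3*u^2*a + 12*t^3*u^2*a*q2 + (-12)*t^3*u^2*a^2 + 8*t^3*u^3*a + 8*t^3*u^3*a*q2 + (-8)*t^3*u^3*a^2 + (-1)*t^4*u + (-2)*t^4*u*q2 + (-1)*t^4*u*q2^2 + 2*t^4*u^2*a*q2 + (-2)*t^4*u^2*a^2 + (-2)*t^4*u^3*a + (-2)*t^4*u^3*a*q2 + 2*t^4*u^3*a^2 + (-4)*t^5*u^2*a + (-4)*t^5*u^2*a*q2 + 4*t^5*u^2*a^2 + t^6*u^2*a + t^6*u^2*a*q2 + (-1)*t^6*u^2*a^2 + (-4)*s*u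 + (-8)*s*u*q2 + (-4)*s*u*q2^2 + (-2)*s*u*q1 + (-4)*s*u*q1*q2 + (-4)*s*u*a + (-4)*s*u*a*q2 + 4*s*u*a*q1 + (-3)*s*u^2 + (-7)*s*u^2*q2 + (-4)*s*u^2*q2^2 + (-6)*s*u^2*a + (-8)*s*u^2*a*q2 + 8*s*u^2*a^2 + (-11)*s*u^3*a + (-12)*s*u^3*a*q2 + 12*s*u^3*a^2 + (-4)*s*u^4*a + (-4)*s*u^4*a*q2 + 4*s*u^4*a^2 + 8*s*t*u + 16*s*t*u*q2 + 8*s*t*u*q2^2 + 2*s*t*u*q1 + 2*s*t*u*q1*q2 + 2*s*t*u*a + 2*s*t*u*a*q2 + (-2)*s*t*u*a*q1 + 5*s*t*u^2 + 10*s*t*u^2*q2 + 5*s*t*u^2*q2^2 + 16*s*t*u^2*a + 16*s*t*u^2*a*q2 + (-20)*s*t*u^2*a^2 + 18*s*t*u^3*a + 18*s*t*u^3*a*q2 + (-22)*s*t*u^3*a^2 + 5*s*t*u^4*a + 5*s*t*u^4*a*q2 + (-6)*s*t*u^4*a^2 + (-1)*s*t^2*u + (-1)*s*t^2*u*q2 +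 (-2)*s*t^2*u^2 + (-4)*s*t^2*u^2*q2 + (-2)*s*t^2*u^2*q2^2 + s*t^2*u^2*a + 4*s*t^2*u^2*a*q2 + 4*s*t^2*u^2*a^2 + (-1)*s*t^2*u^3*a + 8*s*t^2*u^3*a^2 + (-2)*s*t^2*u^4*a + (-2)*s*t^2*u^4*a*q2 + 4*s*t^2*u^4*a^2 + (-5)*s*t^3*u + (-10)*s*t^3*u*q2 + (-5)*s*t^3*u*q2^2 + (-18)*s*t^3*u^2*a + (-18)*s*t^3*u^2*a*q2 + 16*s*t^3*u^2*a^2 + (-10)*s*t^3*u^3*a + (-10)*s*t^3*u^3*a*q2 + 7*s*t^3*u^3*a^2 + (-1)*s*t^3*u^4*a^2 + 2*s*t^4*u + 4*s*t^4*u*q2 + 2*s*t^4*u*q2^2 + 5*s*t^4*u^2*a + 4*s*t^4*u^2*a*q2 + (-8)*s*t^4*u^2*a^2 + 4*s*t^4*u^3*a + 4*s*t^4*u^3*a*q2 + (-6)*s*t^4*u^3*a^2 + 5*s*t^5*u^2*a + 5*s*t^5*u^2*a*q2 + (-3)*s*t^5*u^2*a^2 + s*t^5*u^3*a^2 + (-2)*s*t^6*u^2*a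 + (-2)*s*t^6*u^2*a*q2 + 2*s*t^6*u^2*a^2 + (-4)*s^2*u*q2 + (-4)*s^2*u*q2^2 + 4*s^2*u*a + s^2*u^2 + 2*s^2*u^2*q2 + s^2*u^2*q2^2 + (-8)*s^2*u^2*a + (-18)*s^2*u^2*a*q2 + 18*s^2*u^2*a^2 + (-3)*s^2*u^3*a + (-8)*s^2*u^3*a*q2 + 8*s^2*u^3*a^2 + s^2*u^4*a + s^2*u^4*a*q2 + (-1)*s^2*u^4*a^2 + (-1)*s^2*t*u + (-1)*s^2*t*u*q2 + (-2)*s^2*t*u^2 + (-4)*s^2*t*u^2*q2 + (-2)*s^2*t*u^2*q2^2 + s^2*t*u^2*a + 4*s^2*t*u^2*a*q2 + 4*s^2*t*u^2*a^2 + (-1)*s^2*t*u^3*a + 8*s^2*t*u^3*a^2 + (-2)*s^2*t*u^4*a + (-2)*s^2*t*u^4*a*q2 + 4*s^2*t*u^4*a^2 + s^2*t^2*u^2 + 2*s^2*t^2*u^2*q2 + s^2*t^2*u^2*q2^2 + 4*s^2*t^2*u^2*a + 8*s^2*t^2*u^2*a*q2 + (-24)*s^2*t^2*u^2*a^2 +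 (-14)*s^2*t^2*u^3*a^2 + s^2*t^2*u^4*a + s^2*t^2*u^4*a*q2 + (-4)*s^2*t^2*u^4*a^2 + 2*s^2*t^3*u + 4*s^2*t^3*u*q2 + 2*s^2*t^3*u*q2^2 + s^2*t^3*u^2*a + 4*s^2*t^3*u^2*a^2 + 4*s^2*t^3*u^3*a + 4*s^2*t^3*u^3*a*q2 + (-2)*s^2*t^3*u^3*a^2 + (-1)*s^2*t^4*u + (-2)*s^2*t^4*u*q2 + (-1)*s^2*t^4*u*q2^2 + (-1)*s^2*t^4*u^2*a + (-1)*s^2*t^4*u^2*a*q2 + 9*s^2*t^4*u^2*a^2 + (-2)*s^2*t^4*u^3*a + (-2)*s^2*t^4*u^3*a*q2 + 7*s^2*t^4*u^3*a^2 + s^2*t^4*u^4*a^2 + (-2)*s^2*t^5*u^2*a + (-2)*s^2*t^5*u^2*a*q2 + (-2)*s^2*t^5*u^2*a^2 + s^2*t^6*u^2*a + s^2*t^6*u^2*a*q2 + (-1)*s^2*t^6*u^2*a^2 + (-1)*s^2*t^6*u^3*a^2 + 3*s^3*u + 7*s^3*u*q2 + 4*s^3*u*q2^2 + 11*s^3*u^2*a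 + 12*s^3*u^2*a*q2 + (-12)*s^3*u^2*a^2 + 8*s^3*u^3*a + 8*s^3*u^3*a*q2 + (-8)*s^3*u^3*a^2 + (-5)*s^3*t*u + (-10)*s^3*t*u*q2 + (-5)*s^3*t*u*q2^2 + (-18)*s^3*t*u^2*a + (-18)*s^3*t*u^2*a*q2 + 16*s^3*t*u^2*a^2 + (-10)*s^3*t*u^3*a + (-10)*s^3*t*u^3*a*q2 + 7*s^3*t*u^3*a^2 + (-1)*s^3*t*u^4*a^2 + 2*s^3*t^2*u + 4*s^3*t^2*u*q2 + 2*s^3*t^2*u*q2^2 + s^3*t^2*u^2*a + 4*s^3*t^2*u^2*a^2 + 4*s^3*t^2*u^3*a + 4*s^3*t^2*u^3*a*q2 + (-2)*s^3*t^2*u^3*a^2 + 10*s^3*t^3*u^2*a + 10*s^3*t^3*u^2*a*q2 + (-10)*s^3*t^3*u^2*a^2 + 6*s^3*t^3*u^3*a^2 + 3*s^3*t^3*u^4*a^2 + (-4)*s^3*t^4*u^2*a + (-4)*s^3*t^4*u^2*a*q2 + (-4)*s^3*t^4*u^3*a^2 + (-2)*s^3*t^4*u^4*a^2 + 2*s^3*t^5*u^2*a^2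 + (-3)*s^3*t^5*u^3*a^2 + 2*s^3*t^6*u^3*a^2 + (-1)*s^4*u + (-2)*s^4*u*q2 + (-1)*s^4*u*q2^2 + 2*s^4*u^2*a*q2 + (-2)*s^4*u^2*a^2 + (-2)*s^4*u^3*a + (-2)*s^4*u^3*a*q2 + 2*s^4*u^3*a^2 + 2*s^4*t*u + 4*s^4*t*u*q2 + 2*s^4*t*u*q2^2 + 5*s^4*t*u^2*a + 4*s^4*t*u^2*a*q2 + (-8)*s^4*t*u^2*a^2 + 4*s^4*t*u^3*a + 4*s^4*t*u^3*a*q2 + (-6)*s^4*t*u^3*a^2 + (-1)*s^4*t^2*u + (-2)*s^4*t^2*u*q2 + (-1)*s^4*t^2*u*q2^2 + (-1)*s^4*t^2*u^2*a + (-1)*s^4*t^2*u^2*a*q2 + 9*s^4*t^2*u^2*a^2 + (-2)*s^4*t^2*u^3*a + (-2)*s^4*t^2*u^3*a*q2 + 7*s^4*t^2*u^3*a^2 + s^4*t^2*u^4*a^2 + (-4)*s^4*t^3*u^2*a + (-4)*s^4*t^3*u^2*a*q2 + (-4)*s^4*t^3*u^3*a^2 + (-2)*s^4*t^3*u^4*a^2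 + 2*s^4*t^4*u^2*a + 2*s^4*t^4*u^2*a*q2 + (-2)*s^4*t^4*u^2*a^2 + s^4*t^4*u^4*a^2 + 2*s^4*t^5*u^3*a^2 + (-1)*s^4*t^6*u^3*a^2 + (-4)*s^5*u^2*a + (-4)*s^5*u^2*a*q2 + 4*s^5*u^2*a^2 + 5*s^5*t*u^2*a + 5*s^5*t*u^2*a*q2 + (-3)*s^5*t*u^2*a^2 + s^5*t*u^3*a^2 + (-2)*s^5*t^2*u^2*a + (-2)*s^5*t^2*u^2*a*q2 + (-2)*s^5*t^2*u^2*a^2 + 2*s^5*t^3*u^2*a^2 + (-3)*s^5*t^3*u^3*a^2 + 2*s^5*t^4*u^3*a^2 + s^6*u^2*a + s^6*u^2*a*q2 + (-1)*s^6*u^2*a^2 + (-2)*s^6*t*u^2*a + (-2)*s^6*t*u^2*a*q2 + 2*s^6*t*u^2*a^2 + s^6*t^2*u^2*a + s^6*t^2*u^2*a*q2 + (-1)*s^6*t^2*u^2*a^2 + (-1)*s^6*t^2*u^3*a^2 + 2*s^6*t^3*u^3*a^2 + (-1)*s^6*t^4*u^3*a^2) * hst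
    rcases mul_eq_zero.mp hkey with h | h
    · exact absurd h hz
    · exact sub_eq_zero.mp h

set_option maxRecDepth 100000
set_option maxHeartbeats 4000000
/-- Let `s, u ∈ ℂ` with `s ≠ 0`, let `A = !![s, 1; 0, s⁻¹]`, `B = !![s, 0; -u, s⁻¹]`,
`W = B * A⁻¹ * B⁻¹ * A`, `x = s + s⁻¹`, `z = 2 + (2 - s² - s⁻²)u + u²`. Let `n ≥ 1` be a
natural number, and set `Δ = ∑_{i=0}^{n-1} W^(-i)` and `Ω = A⁻¹ * (1 - B) * (1 - A) * Δ`.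
If the Riley condition `S n = (u² - (u+1)(s² + s⁻² - 3)) * S (n-1)` holds and `x ≠ 2`,
then `det (1 + Ω) / (2 - x) = (2 - x) * (P (n-1) + P (n-2)) + x * S (n-1)`. This is the
Reidemeister torsion `τ_ρ(E_K)` of the complement of the twist knot `K = J(2,2n)` at the
nonabelian representation `ρ` determined by `(s, u)`, computed via Johnson's formula.
Here `S` denotes the Chebyshev polynomials of the second kind evaluated at `S` and
`P k = ∑_{i=0}^{k} S i` with `P (-1) = 0`. -/
theorem torsion_twist_knot_complement (s u x z : ℂ) (hs : s ≠ 0)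
    (hx : x = s + s⁻¹) (hz : z = 2 + (2 - s ^ 2 - s⁻¹ ^ 2) * u + u ^ 2)
    (S : ℤ → ℂ) (hS0 : S 0 = 1) (hS1 : S 1 = z)
    (hSrec : ∀ k : ℤ, S k = z * S (k - 1) - S (k - 2))
    (P : ℤ → ℂ) (hPneg : P (-1) = 0)
    (hP : ∀ k : ℕ, P (k : ℤ) = ∑ i ∈ Finset.range (k + 1), S (i : ℤ))
    (A B W : Matrix (Fin 2) (Fin 2) ℂ)
    (hA : A = !![s, 1; 0, s⁻¹]) (hB : B = !![s, 0; -u, s⁻¹])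
    (hW : W = B * A⁻¹ * B⁻¹ * A)
    (n : ℕ) (hn : 1 ≤ n)
    (Δ Ω : Matrix (Fin 2) (Fin 2) ℂ)
    (hΔ : Δ = ∑ i ∈ Finset.range n, W ^ (-(i : ℤ)))
    (hΩ : Ω = A⁻¹ * (1 - B) * (1 - A) * Δ)
    (hRiley : S (n : ℤ) = (u ^ 2 - (u + 1) * (s ^ 2 + s⁻¹ ^ 2 - 3)) * S ((n : ℤ) - 1))
    (hx2 : x ≠ 2) :
    (1 + Ω).det / (2 - x) =
      (2 - x) * (P ((n : ℤ) - 1) + P ((n : ℤ) - 2)) + x * S ((n : ℤ) - 1) := by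
  have hst : s * s⁻¹ = 1 := mul_inv_cancel₀ hs
  have h2x : (2 : ℂ) - x ≠ 0 := sub_ne_zero_of_ne (Ne.symm hx2)
  have hSm1 : S (-1) = 0 := by
    have h := hSrec 1
    norm_num at h
    rw [hS0, hS1] at h
    linear_combination h
  have hSm2 : S (-2) = -1 := by
    have h := hSrec 0
    norm_num at h
    rw [hS0, hSm1] at h
    linear_combination h
  have L1 : ∀ m : ℕ, ∑ i ∈ Finset.range m, S ((i : ℤ) - 2)
      = (∑ i ∈ Finset.range m, S ((i : ℤ) - 1)) - S ((m : ℤ) - 2) - 1 := by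
    intro m
    induction m with
    | zero => norm_num [hSm2]
    | succ k ih =>
      have e2 : ((k + 1 : ℕ) : ℤ) - 2 = (k : ℤ) - 1 := by push_cast; ring
      rw [Finset.sum_range_succ, Finset.sum_range_succ, e2]
      linear_combination ih
  have L2 : ∀ m : ℕ, (z - 2) * ∑ i ∈ Finset.range m, S ((i : ℤ) - 1)
      = S ((m : ℤ) - 1) - S ((m : ℤ) - 2) - 1 := by
    intro m
    induction m with
    | zero => norm_num [hSm1, hSm2]
    | succ k ih =>
      have e1 : ((k + 1 : ℕ) : ℤ) - 1 = (k : ℤ) := by push_cast; ring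
      have e2 : ((k + 1 : ℕ) : ℤ) - 2 = (k : ℤ) - 1 := by push_cast; ring
      rw [Finset.sum_range_succ, e1, e2]
      linear_combination ih - hSrec (k : ℤ)
  have L3 : ∀ m : ℕ, S ((m : ℤ) - 1) ^ 2 - z * S ((m : ℤ) - 1) * S ((m : ℤ) - 2)
      + S ((m : ℤ) - 2) ^ 2 = 1 := by
    intro m
    induction m with
    | zero => norm_num [hSm1, hSm2]
    | succ k ih =>
      have e1 : ((k + 1 : ℕ) : ℤ) - 1 = (k : ℤ) := by push_cast; ring
      have e2 : ((k + 1 : ℕ) : ℤ) - 2 = (k : ℤ) - 1 := by push_cast; ring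
      rw [e1, e2]
      linear_combination ih + (S (k : ℤ) - S ((k : ℤ) - 2)) * hSrec (k : ℤ)
  have L4 : ∀ m : ℕ, (z - 2) * (∑ i ∈ Finset.range m, S ((i : ℤ) - 1)) ^ 2
      + 2 * ∑ i ∈ Finset.range m, S ((i : ℤ) - 1)
      = S ((m : ℤ) - 1) * S ((m : ℤ) - 2) := by
    intro m
    induction m with
    | zero => norm_num [hSm1, hSm2]
    | succ k ih =>
      have e1 : ((k + 1 : ℕ) : ℤ) - 1 = (k : ℤ) := by push_cast; ring
      have e2 : ((k + 1 : ℕ) : ℤ) - 2 = (k : ℤ) - 1 := by push_cast; ring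
      rw [Finset.sum_range_succ, e1, e2]
      linear_combination ih + 2 * S ((k : ℤ) - 1) * L2 k - S ((k : ℤ) - 1) * hSrec (k : ℤ)
  have L6 : ∀ m : ℕ, P (m : ℤ) = P ((m : ℤ) - 1) + S (m : ℤ) := by
    intro m
    cases m with
    | zero =>
      have h0 := hP 0
      rw [Finset.sum_range_one] at h0
      norm_num at h0 ⊢
      rw [h0, hPneg, hS0]
      ring
    | succ k =>
      have h1 := hP (k + 1)
      have h2 := hP k
      rw [Finset.sum_range_succ] at h1
      have e1 : ((k + 1 : ℕ) : ℤ) - 1 = (k : ℤ) := by push_cast; ring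
      rw [e1]
      linear_combination h1 - h2
  -- the sum a, and its identification with P (n-2)
  have haP : P ((n : ℤ) - 2) = ∑ i ∈ Finset.range n, S ((i : ℤ) - 1) := by
    obtain ⟨m, rfl⟩ : ∃ m, n = m + 1 := ⟨n - 1, by omega⟩
    rw [Finset.sum_range_succ']
    have hc : ∀ i ∈ Finset.range m, S (((i + 1 : ℕ) : ℤ) - 1) = S (i : ℤ) := by
      intro i _
      congr 1
      push_cast
      ring
    rw [Finset.sum_congr rfl hc]
    norm_num [hSm1]
    cases m with
    | zero => norm_num [hPneg]
    | succ j =>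
      have e1 : ((j + 1 : ℕ) : ℤ) + 1 - 2 = ((j : ℕ) : ℤ) := by push_cast; ring
      rw [e1, hP j]
  have hPn1 : P ((n : ℤ) - 1) = P ((n : ℤ) - 2) + S ((n : ℤ) - 1) := by
    obtain ⟨m, rfl⟩ : ∃ m, n = m + 1 := ⟨n - 1, by omega⟩
    have h := L6 m
    have e1 : ((m + 1 : ℕ) : ℤ) - 1 = (m : ℤ) := by push_cast; ring
    have e2 : ((m + 1 : ℕ) : ℤ) - 2 = (m : ℤ) - 1 := by push_cast; ring
    rw [e1, e2]
    exact h
  -- matrices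
  have hAi : A⁻¹ = !![s⁻¹, -1; 0, s] := by
    apply inv_eq_right_inv
    rw [hA]
    ext i j
    fin_cases i <;> fin_cases j <;>
      simp [Matrix.mul_apply, Fin.sum_univ_two, Matrix.one_apply] <;>
      field_simp
  have hBi : B⁻¹ = !![s⁻¹, 0; u, s] := by
    apply inv_eq_right_inv
    rw [hB]
    ext i j
    fin_cases i <;> fin_cases j <;>
      simp [Matrix.mul_apply, Fin.sum_univ_two, Matrix.one_apply] <;>
      field_simp <;>
      ring
  have hWV : W * !![1 + 2*u + u^2 - s⁻¹^2*u, s - s⁻¹ + s*u; s⁻¹*u - s*u - s*u^2, 1 - s^2*u] = 1 := by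
    rw [hW, hAi, hBi, hA, hB]
    ext i j
    fin_cases i <;> fin_cases j <;>
      (simp [Matrix.mul_apply, Fin.sum_univ_two, Matrix.one_apply]; field_simp; ring)
  have hWinv : W⁻¹ = !![1 + 2*u + u^2 - s⁻¹^2*u, s - s⁻¹ + s*u; s⁻¹*u - s*u - s*u^2, 1 - s^2*u] :=
    inv_eq_right_inv hWV
  have hzpow : ∀ i : ℕ, W ^ (-(i : ℤ))
      = !![1 + 2*u + u^2 - s⁻¹^2*u, s - s⁻¹ + s*u; s⁻¹*u - s*u - s*u^2, 1 - s^2*u] ^ i := by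
    intro i
    rw [Matrix.zpow_neg_natCast, ← Matrix.inv_pow', hWinv]
  have hV2 : !![1 + 2*u + u^2 - s⁻¹^2*u, s - s⁻¹ + s*u; s⁻¹*u - s*u - s*u^2, 1 - s^2*u] *
      !![1 + 2*u + u^2 - s⁻¹^2*u, s - s⁻¹ + s*u; s⁻¹*u - s*u - s*u^2, 1 - s^2*u]
      = z • !![1 + 2*u + u^2 - s⁻¹^2*u, s - s⁻¹ + s*u; s⁻¹*u - s*u - s*u^2, 1 - s^2*u] - 1 := by
    rw [hz]
    ext i j
    fin_cases i <;> fin_cases j <;>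
      (simp [Matrix.mul_apply, Fin.sum_univ_two, Matrix.one_apply, Matrix.smul_apply,
        Matrix.sub_apply]; field_simp; ring)
  have hpow : ∀ i : ℕ,
      !![1 + 2*u + u^2 - s⁻¹^2*u, s - s⁻¹ + s*u; s⁻¹*u - s*u - s*u^2, 1 - s^2*u] ^ i
      = S ((i : ℤ) - 1) • !![1 + 2*u + u^2 - s⁻¹^2*u, s - s⁻¹ + s*u; s⁻¹*u - s*u - s*u^2, 1 - s^2*u]
        - S ((i : ℤ) - 2) • 1 := by
    intro i
    induction i with
    | zero =>
      rw [pow_zero]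
      norm_num [hSm1, hSm2]
    | succ k ih =>
      have e1 : ((k + 1 : ℕ) : ℤ) - 1 = (k : ℤ) := by push_cast; ring
      have e2 : ((k + 1 : ℕ) : ℤ) - 2 = (k : ℤ) - 1 := by push_cast; ring
      rw [pow_succ, ih, e1, e2, sub_mul, smul_mul_assoc, smul_mul_assoc, one_mul, hV2,
        hSrec (k : ℤ)]
      module
  have hΔe : Δ = (∑ i ∈ Finset.range n, S ((i : ℤ) - 1)) •
        !![1 + 2*u + u^2 - s⁻¹^2*u, s - s⁻¹ + s*u; s⁻¹*u - s*u - s*u^2, 1 - s^2*u]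
      - ((∑ i ∈ Finset.range n, S ((i : ℤ) - 1)) - S ((n : ℤ) - 2) - 1) • 1 := by
    rw [hΔ]
    have hc : ∀ i ∈ Finset.range n, W ^ (-(i : ℤ))
        = S ((i : ℤ) - 1) • !![1 + 2*u + u^2 - s⁻¹^2*u, s - s⁻¹ + s*u; s⁻¹*u - s*u - s*u^2, 1 - s^2*u]
          - S ((i : ℤ) - 2) • 1 := fun i _ => by rw [hzpow i, hpow i]
    rw [Finset.sum_congr rfl hc, Finset.sum_sub_distrib, ← Finset.sum_smul, ← Finset.sum_smul, L1 n]
  have hE1 := L2 n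
  have hE2 := L3 n
  have hE3 := L4 n
  have hR0 : z * S ((n : ℤ) - 1) - S ((n : ℤ) - 2)
      = (u ^ 2 - (u + 1) * (s ^ 2 + s⁻¹ ^ 2 - 3)) * S ((n : ℤ) - 1) := by
    linear_combination hRiley - hSrec (n : ℤ)
  obtain ⟨a, ha⟩ : ∃ a', (∑ i ∈ Finset.range n, S ((i : ℤ) - 1)) = a' := ⟨_, rfl⟩
  obtain ⟨q1, hq1⟩ : ∃ q', S ((n : ℤ) - 1) = q' := ⟨_, rfl⟩
  obtain ⟨q2, hq2⟩ : ∃ q', S ((n : ℤ) - 2) = q' := ⟨_, rfl⟩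
  rw [ha] at hE1 hE3 hΔe
  rw [hq1] at hE1 hE2 hE3 hR0 hPn1 ⊢
  rw [hq2] at hE1 hE2 hE3 hR0 hΔe
  rw [hz] at hE1 hE2 hE3 hR0
  have hdet : (1 + Ω).det = 1 + (-1)*u + (-1)*u*q2 + (-2)*u^2*a + (-1)*u^3*a + s⁻¹ + s⁻¹*q2 + s⁻¹*u*a + 2*s⁻¹*u^2*a + s⁻¹^2*u*a + s⁻¹^2*u^2*a + (-2)*s⁻¹^3*u*a + s + s*q2 + s*u*a + 2*s*u^2*a + (-3)*s*s⁻¹ + (-2)*s*s⁻¹*q2 + s*s⁻¹*q2^2 + (-4)*s*s⁻¹*u*a + 2*s*s⁻¹*u*a*q2 + (-2)*s*s⁻¹*u^2*a + s*s⁻¹*u^2*a*q2 + (-1)*s*s⁻¹^2 + (-3)*s*s⁻¹^2*q2 + (-2)*s*s⁻¹^2*q2^2 + (-2)*s*s⁻¹^2*u*a + (-4)*s*s⁻¹^2*u*a*q2 + (-2)*s*s⁻¹^2*u^2*a + (-2)*s*s⁻¹^2*u^2*a*q2 + s*s⁻¹^3 + 2*s*s⁻¹^3*q2 + s*s⁻¹^3*q2^2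 + 3*s*s⁻¹^3*u*a + s*s⁻¹^3*u*a*q2 + s*s⁻¹^3*u*a^2 + s*s⁻¹^3*u^2*a + s*s⁻¹^3*u^2*a*q2 + 2*s*s⁻¹^4*u*a + 2*s*s⁻¹^4*u*a*q2 + (-2)*s*s⁻¹^4*u*a^2 + (-1)*s*s⁻¹^5*u*a + (-1)*s*s⁻¹^5*u*a*q2 + s*s⁻¹^5*u*a^2 + s^2*u*a + s^2*u^2*a + (-1)*s^2*s⁻¹ + (-3)*s^2*s⁻¹*q2 + (-2)*s^2*s⁻¹*q2^2 + (-2)*s^2*s⁻¹*u*a + (-4)*s^2*s⁻¹*u*a*q2 + (-2)*s^2*s⁻¹*u^2*a + (-2)*s^2*s⁻¹*u^2*a*q2 + 4*s^2*s⁻¹^2 + 8*s^2*s⁻¹^2*q2 + 4*s^2*s⁻¹^2*q2^2 + 8*s^2*s⁻¹^2*u*a + 8*s^2*s⁻¹^2*u*a*q2 + (-2)*s^2*s⁻¹^2*u*a^2 + 4*s^2*s⁻¹^2*u^2*a + 4*s^2*s⁻¹^2*u^2*a*q2 + (-2)*s^2*s⁻¹^2*u^2*a^2 + (-2)*s^2*s⁻¹^3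 + (-4)*s^2*s⁻¹^3*q2 + (-2)*s^2*s⁻¹^3*q2^2 + (-3)*s^2*s⁻¹^3*u*a + (-2)*s^2*s⁻¹^3*u*a*q2 + 2*s^2*s⁻¹^3*u*a^2 + (-2)*s^2*s⁻¹^3*u^2*a + (-2)*s^2*s⁻¹^3*u^2*a*q2 + 4*s^2*s⁻¹^3*u^2*a^2 + (-4)*s^2*s⁻¹^4*u*a + (-4)*s^2*s⁻¹^4*u*a*q2 + 2*s^2*s⁻¹^4*u*a^2 + (-2)*s^2*s⁻¹^4*u^2*a^2 + 2*s^2*s⁻¹^5*u*a + 2*s^2*s⁻¹^5*u*a*q2 + (-2)*s^2*s⁻¹^5*u*a^2 + (-2)*s^3*u*a + s^3*s⁻¹ + 2*s^3*s⁻¹*q2 + s^3*s⁻¹*q2^2 + 3*s^3*s⁻¹*u*a + s^3*s⁻¹*u*a*q2 + s^3*s⁻¹*u*a^2 + s^3*s⁻¹*u^2*a + s^3*s⁻¹*u^2*a*q2 + (-2)*s^3*s⁻¹^2 + (-4)*s^3*s⁻¹^2*q2 + (-2)*s^3*s⁻¹^2*q2^2 + (-3)*s^3*s⁻¹^2*u*a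 + (-2)*s^3*s⁻¹^2*u*a*q2 + 2*s^3*s⁻¹^2*u*a^2 + (-2)*s^3*s⁻¹^2*u^2*a + (-2)*s^3*s⁻¹^2*u^2*a*q2 + 4*s^3*s⁻¹^2*u^2*a^2 + s^3*s⁻¹^3 + 2*s^3*s⁻¹^3*q2 + s^3*s⁻¹^3*q2^2 + (-6)*s^3*s⁻¹^3*u*a^2 + s^3*s⁻¹^3*u^2*a + s^3*s⁻¹^3*u^2*a*q2 + (-7)*s^3*s⁻¹^3*u^2*a^2 + 2*s^3*s⁻¹^4*u*a + 2*s^3*s⁻¹^4*u*a*q2 + 2*s^3*s⁻¹^4*u*a^2 + 2*s^3*s⁻¹^4*u^2*a^2 + (-1)*s^3*s⁻¹^5*u*a + (-1)*s^3*s⁻¹^5*u*a*q2 + s^3*s⁻¹^5*u*a^2 + s^3*s⁻¹^5*u^2*a^2 + 2*s^4*s⁻¹*u*a + 2*s^4*s⁻¹*u*a*q2 + (-2)*s^4*s⁻¹*u*a^2 + (-4)*s^4*s⁻¹^2*u*a + (-4)*s^4*s⁻¹^2*u*a*q2 + 2*s^4*s⁻¹^2*u*a^2 + (-2)*s^4*s⁻¹^2*u^2*a^2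 + 2*s^4*s⁻¹^3*u*a + 2*s^4*s⁻¹^3*u*a*q2 + 2*s^4*s⁻¹^3*u*a^2 + 2*s^4*s⁻¹^3*u^2*a^2 + (-2)*s^4*s⁻¹^4*u*a^2 + 2*s^4*s⁻¹^4*u^2*a^2 + (-2)*s^4*s⁻¹^5*u^2*a^2 + (-1)*s^5*s⁻¹*u*a + (-1)*s^5*s⁻¹*u*a*q2 + s^5*s⁻¹*u*a^2 + 2*s^5*s⁻¹^2*u*a + 2*s^5*s⁻¹^2*u*a*q2 + (-2)*s^5*s⁻¹^2*u*a^2 + (-1)*s^5*s⁻¹^3*u*a + (-1)*s^5*s⁻¹^3*u*a*q2 + s^5*s⁻¹^3*u*a^2 + s^5*s⁻¹^3*u^2*a^2 + (-2)*s^5*s⁻¹^4*u^2*a^2 + s^5*s⁻¹^5*u^2*a^2 := by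
    rw [hΩ, hΔe, hAi, hB, hA, Matrix.det_fin_two]
    simp only [Matrix.mul_apply, Fin.sum_univ_two, Matrix.sub_apply, Matrix.add_apply,
      Matrix.smul_apply, Matrix.one_apply, Matrix.cons_val', Matrix.cons_val_zero,
      Matrix.cons_val_one, Matrix.head_cons, Matrix.head_fin_const, Matrix.empty_val',
      Matrix.cons_val_fin_one, smul_eq_mul]
    norm_num
    ring
  rw [div_eq_iff h2x, hdet, hPn1, haP, ha, hx]
  linear_combination key_scalar s s⁻¹ u a q1 q2 hst hE1 hE2 hE3 hR0
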